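/- Let A be a residuated lattice, F a filter of A, and m₁, m₂ two distinct F-minimal prime filters of A. Then ω_F(J) = A, where J is the lattice ideal of A generated by (A \ m₁) ∪ (A \ m₂); that is, the supremum of m₁ and m₂ in the lattice of ω_F-filters equals A. -/
import Mathlib


class ResiduatedLattice (α : Type*) extends Lattice α, CommMonoid α, BoundedOrder α where
  rimp : α → α → α
  one_eq_top : (1 : α) = ⊤
  adjunction : ∀ x y z : α, x * y ≤ z ↔ x ≤ rimp y z

variable {α : Type*} [ResiduatedLattice α]

/-- A filter of a residuated lattice: nonempty, closed under `⊙` and upward closed. -/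
def IsFilter (F : Set α) : Prop :=
  F.Nonempty ∧ (∀ x ∈ F, ∀ y ∈ F, x * y ∈ F) ∧ ∀ x ∈ F, ∀ y : α, x ≤ y → y ∈ F

/-- A prime filter: a proper filter such that `x ⊔ y ∈ P` implies `x ∈ P` or `y ∈ P`. -/
def IsPrimeFilter (P : Set α) : Prop :=
  IsFilter P ∧ P ≠ Set.univ ∧ ∀ x y : α, x ⊔ y ∈ P → x ∈ P ∨ y ∈ P

/-- A `∨`-closed subset: nonempty and closed under join. -/
def IsJoinClosed (C : Set α) : Prop :=
  C.Nonempty ∧ ∀ x ∈ C, ∀ y ∈ C, x ⊔ y ∈ C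

/-- The filter generated by a set. -/
def filterGen (X : Set α) : Set α := ⋂₀ {G : Set α | IsFilter G ∧ X ⊆ G}

/-- An `X`-minimal prime filter: prime, contains `X`, minimal among primes containing `X`. -/
def IsMinPrimeOver (X P : Set α) : Prop :=
  IsPrimeFilter P ∧ X ⊆ P ∧ ∀ Q : Set α, IsPrimeFilter Q → X ⊆ Q → Q ⊆ P → Q = P

/-- `ω_F(X) = {a | x ∨ a ∈ F for some x ∈ X}`. -/
def omegaF (F X : Set α) : Set α := {a : α | ∃ x ∈ X, x ⊔ a ∈ F}

/-- The coannihilator `(F : x) = {a | x ∨ a ∈ F}`. -/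
def coann (F : Set α) (x : α) : Set α := {a : α | x ⊔ a ∈ F}

/-- `D_F(H) = {a | x ∨ a ∈ F for some x ∉ H}`, the set of `F`-divisors of `H`. -/
def divisorsF (F H : Set α) : Set α := {a : α | ∃ x ∉ H, x ⊔ a ∈ F}

/-- A lattice ideal: nonempty, closed under join and downward closed. -/
def IsLatticeIdeal (I : Set α) : Prop :=
  I.Nonempty ∧ (∀ x ∈ I, ∀ y ∈ I, x ⊔ y ∈ I) ∧ ∀ x y : α, x ≤ y → y ∈ I → x ∈ I

/-- The lattice ideal generated by a set. -/
def idealGen (X : Set α) : Set α := ⋂₀ {I : Set α | IsLatticeIdeal I ∧ X ⊆ I}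

/-- An `ω_F`-filter: a filter of the form `ω_F(I)` for some lattice ideal `I`. -/
def IsOmegaFilter (F H : Set α) : Prop :=
  IsFilter H ∧ ∃ I : Set α, IsLatticeIdeal I ∧ H = omegaF F I

lemma rl_le_one (a : α) : a ≤ 1 := ResiduatedLattice.one_eq_top (α := α) ▸ le_top

lemma rl_mul_le_mul {a b c d : α} (h1 : a ≤ b) (h2 : c ≤ d) : a * c ≤ b * d := by
  have s1 : a * c ≤ b * c := by
    rw [ResiduatedLattice.adjunction]
    exact le_trans h1 ((ResiduatedLattice.adjunction b c (b*c)).mp le_rfl)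
  have s2 : b * c ≤ b * d := by
    rw [mul_comm b c, mul_comm b d, ResiduatedLattice.adjunction]
    exact le_trans h2 ((ResiduatedLattice.adjunction d b (d*b)).mp le_rfl)
  exact le_trans s1 s2

lemma rl_mul_le_left (a b : α) : a * b ≤ a := by
  have := rl_mul_le_mul (le_refl a) (rl_le_one b)
  simpa using this

lemma rl_mul_sup (a b c : α) : a * (b ⊔ c) = (a * b) ⊔ (a * c) := by
  apply le_antisymm
  · rw [mul_comm, ResiduatedLattice.adjunction]
    apply sup_le
    · rw [← ResiduatedLattice.adjunction, mul_comm]; exact le_sup_left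
    · rw [← ResiduatedLattice.adjunction, mul_comm]; exact le_sup_right
  · exact sup_le (rl_mul_le_mul le_rfl le_sup_left) (rl_mul_le_mul le_rfl le_sup_right)

lemma rl_pow_sup_le (x y : α) : ∀ n m : ℕ, (x ⊔ y) ^ (n + m) ≤ x ^ n ⊔ y ^ m := by
  intro n
  induction n with
  | zero =>
    intro m
    have h : (x : α) ^ 0 = ⊤ := by rw [pow_zero, ResiduatedLattice.one_eq_top]
    rw [h]; exact le_trans le_top le_sup_left
  | succ n ihn =>
    intro m
    induction m with
    | zero =>
      have h : (y : α) ^ 0 = ⊤ := by rw [pow_zero, ResiduatedLattice.one_eq_top]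
      rw [h]; exact le_trans le_top le_sup_right
    | succ m ihm =>
      have e1 : n + 1 + (m + 1) = (n + 1 + m) + 1 := by ring
      have e2 : n + (m + 1) = n + 1 + m := by ring
      calc (x ⊔ y) ^ (n + 1 + (m + 1))
          = (x ⊔ y) ^ (n + 1 + m) * (x ⊔ y) := by rw [e1, pow_succ]
        _ = (x ⊔ y) ^ (n + 1 + m) * x ⊔ (x ⊔ y) ^ (n + 1 + m) * y := rl_mul_sup _ x y
        _ ≤ x ^ (n + 1) ⊔ y ^ (m + 1) := by
            apply sup_le
            · have h1 : (x ⊔ y) ^ (n + 1 + m) * x ≤ (x ^ n ⊔ y ^ (m+1)) * x :=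
                rl_mul_le_mul (e2 ▸ ihn (m+1)) le_rfl
              refine le_trans h1 ?_
              rw [mul_comm, rl_mul_sup]
              apply sup_le
              · rw [mul_comm, ← pow_succ]; exact le_sup_left
              · exact le_trans (rl_mul_le_mul (rl_le_one x) le_rfl)
                  (by rw [one_mul]; exact le_sup_right)
            · have h1 : (x ⊔ y) ^ (n + 1 + m) * y ≤ (x ^ (n+1) ⊔ y ^ m) * y :=
                rl_mul_le_mul ihm le_rfl
              refine le_trans h1 ?_
              rw [mul_comm, rl_mul_sup]
              apply sup_le
              · exact le_trans (rl_mul_le_mul (rl_le_one y) le_rfl)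
                  (by rw [one_mul]; exact le_sup_left)
              · rw [mul_comm, ← pow_succ]; exact le_sup_right

/-- The filter extension of a filter `P` by an element `x`. -/
def rlExt (P : Set α) (x : α) : Set α := {z | ∃ p ∈ P, ∃ n : ℕ, p * x ^ n ≤ z}

lemma rlExt_isFilter {P : Set α} (hP : IsFilter P) (x : α) : IsFilter (rlExt P x) := by
  obtain ⟨⟨p0, hp0⟩, hmul, hup⟩ := hP
  refine ⟨⟨p0, p0, hp0, 0, by simpa using rl_mul_le_left p0 _⟩, ?_, ?_⟩
  · rintro z ⟨p, hp, n, hn⟩ w ⟨q, hq, m, hm⟩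
    refine ⟨p * q, hmul p hp q hq, n + m, ?_⟩
    calc p * q * x ^ (n + m) = (p * x ^ n) * (q * x ^ m) := by
          rw [pow_add, mul_mul_mul_comm]
      _ ≤ z * w := rl_mul_le_mul hn hm
  · rintro z ⟨p, hp, n, hn⟩ w hzw
    exact ⟨p, hp, n, le_trans hn hzw⟩

lemma rlExt_subset {P : Set α} (hP : IsFilter P) (x : α) : P ⊆ rlExt P x := by
  intro p hp
  exact ⟨p, hp, 0, by simpa using rl_mul_le_left p _⟩

lemma rlExt_mem {P : Set α} (hP : IsFilter P) (x : α) : x ∈ rlExt P x := by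
  obtain ⟨p0, hp0⟩ := hP.1
  refine ⟨p0, hp0, 1, ?_⟩
  rw [pow_one]
  exact le_trans (rl_mul_le_mul (rl_le_one p0) le_rfl) (by rw [one_mul])

/-- Prime filter separation: a filter disjoint from a join-closed set extends to a
prime filter disjoint from it. -/
lemma rl_separation {F C : Set α} (hF : IsFilter F)
    (hC : C.Nonempty ∧ ∀ x ∈ C, ∀ y ∈ C, x ⊔ y ∈ C) (hdisj : F ∩ C = ∅) :
    ∃ P : Set α, IsPrimeFilter P ∧ F ⊆ P ∧ P ∩ C = ∅ := by
  classical
  set S : Set (Set α) := {G | IsFilter G ∧ F ⊆ G ∧ G ∩ C = ∅} with hS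
  have hFS : F ∈ S := ⟨hF, subset_rfl, hdisj⟩
  obtain ⟨P, hFP, hPS, hPmax⟩ := zorn_subset_nonempty S (fun c hcS hchain hcne => by
    obtain ⟨G0, hG0⟩ := hcne
    refine ⟨⋃₀ c, ⟨⟨?_, ?_, ?_⟩, ?_, ?_⟩, fun s hs => Set.subset_sUnion_of_mem hs⟩
    · obtain ⟨g, hg⟩ := (hcS hG0).1.1
      exact ⟨g, G0, hG0, hg⟩
    · rintro x ⟨G1, hG1, hx⟩ y ⟨G2, hG2, hy⟩
      rcases hchain.total hG1 hG2 with h | h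
      · exact ⟨G2, hG2, (hcS hG2).1.2.1 x (h hx) y hy⟩
      · exact ⟨G1, hG1, (hcS hG1).1.2.1 x hx y (h hy)⟩
    · rintro x ⟨G1, hG1, hx⟩ y hxy
      exact ⟨G1, hG1, (hcS hG1).1.2.2 x hx y hxy⟩
    · exact subset_trans (hcS hG0).2.1 (Set.subset_sUnion_of_mem hG0)
    · rw [Set.eq_empty_iff_forall_notMem]
      rintro a ⟨⟨G1, hG1, ha⟩, haC⟩
      have := (hcS hG1).2.2
      rw [Set.eq_empty_iff_forall_notMem] at this
      exact this a ⟨ha, haC⟩) F hFS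
  obtain ⟨hPfil, hFsub, hPdisj⟩ := hPS
  have hPC : ∀ a ∈ C, a ∉ P := by
    intro a haC haP
    rw [Set.eq_empty_iff_forall_notMem] at hPdisj
    exact hPdisj a ⟨haP, haC⟩
  refine ⟨P, ⟨hPfil, ?_, ?_⟩, hFP, hPdisj⟩
  · obtain ⟨c0, hc0⟩ := hC.1
    intro h
    exact hPC c0 hc0 (h ▸ Set.mem_univ c0)
  · intro x y hxy
    by_contra hcon
    push_neg at hcon
    obtain ⟨hx, hy⟩ := hcon
    -- the extension by x must meet C, likewise for y
    have hmeet : ∀ w : α, w ∉ P → w ⊔ x ⊔ y ∈ P → ∃ c ∈ C, c ∈ rlExt P w := by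
      intro w hw _
      by_contra hno
      push_neg at hno
      have hmem : rlExt P w ∈ S := by
        refine ⟨rlExt_isFilter hPfil w, subset_trans hFsub (rlExt_subset hPfil w), ?_⟩
        rw [Set.eq_empty_iff_forall_notMem]
        rintro a ⟨haE, haC⟩
        exact hno a haC haE
      have : rlExt P w ⊆ P := hPmax hmem (rlExt_subset hPfil w)
      exact hw (this (rlExt_mem hPfil w))
    obtain ⟨c1, hc1C, p1, hp1, n, hn⟩ := hmeet x hx (by simpa [sup_comm, sup_assoc, sup_left_comm] using hxy)
    obtain ⟨c2, hc2C, p2, hp2, m, hm⟩ := hmeet y hy (by simpa [sup_comm, sup_assoc, sup_left_comm] using hxy)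
    have hcC : c1 ⊔ c2 ∈ C := hC.2 c1 hc1C c2 hc2C
    have hbig : p1 * p2 * (x ⊔ y) ^ (n + m) ≤ c1 ⊔ c2 := by
      calc p1 * p2 * (x ⊔ y) ^ (n + m)
          ≤ p1 * p2 * (x ^ n ⊔ y ^ m) := rl_mul_le_mul le_rfl (rl_pow_sup_le x y n m)
        _ = p1 * p2 * x ^ n ⊔ p1 * p2 * y ^ m := rl_mul_sup _ _ _
        _ ≤ (p1 * x ^ n) ⊔ (p2 * y ^ m) := by
            apply sup_le
            · have h1 : p1 * p2 * x ^ n = p2 * (p1 * x ^ n) := by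
                rw [mul_comm p1 p2, mul_assoc]
              rw [h1]
              have h2 : p2 * (p1 * x ^ n) ≤ 1 * (p1 * x ^ n) :=
                rl_mul_le_mul (rl_le_one p2) le_rfl
              rw [one_mul] at h2
              exact le_trans h2 le_sup_left
            · have h1 : p1 * p2 * y ^ m = p1 * (p2 * y ^ m) := by rw [mul_assoc]
              rw [h1]
              have h2 : p1 * (p2 * y ^ m) ≤ 1 * (p2 * y ^ m) :=
                rl_mul_le_mul (rl_le_one p1) le_rfl
              rw [one_mul] at h2
              exact le_trans h2 le_sup_right
        _ ≤ c1 ⊔ c2 := sup_le (le_trans hn le_sup_left) (le_trans hm le_sup_right)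
    have hpow : (x ⊔ y) ^ (n + m) ∈ P := by
      induction (n + m) with
      | zero => simpa using hPfil.2.2 (x ⊔ y) hxy 1 (rl_le_one _)
      | succ k ih => rw [pow_succ]; exact hPfil.2.1 _ ih _ hxy
    have : p1 * p2 * (x ⊔ y) ^ (n + m) ∈ P :=
      hPfil.2.1 _ (hPfil.2.1 _ hp1 _ hp2) _ hpow
    exact hPC _ hcC (hPfil.2.2 _ this _ hbig)

/-- Key property of F-minimal primes: `m = ω_F(A \ m)`. -/
lemma rl_minprime_key {F m : Set α} (hF : IsFilter F) (hm : IsMinPrimeOver F m)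
    {a : α} (ha : a ∈ m) : ∃ x ∉ m, x ⊔ a ∈ F := by
  classical
  by_contra hno
  push_neg at hno
  obtain ⟨⟨hmfil, hmne, hmprime⟩, hFm, hmin⟩ := hm
  -- m is proper, so its complement is nonempty
  obtain ⟨t, ht⟩ : ∃ t, t ∉ m := by
    by_contra h
    push_neg at h
    exact hmne (Set.eq_univ_of_forall h)
  set C : Set α := {c | ∃ x, x ∉ m ∧ c ≤ x ⊔ a} with hCdef
  have hCjc : C.Nonempty ∧ ∀ u ∈ C, ∀ v ∈ C, u ⊔ v ∈ C := by
    constructor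
    · exact ⟨t, t, ht, le_sup_left⟩
    · rintro u ⟨x1, hx1, hu⟩ v ⟨x2, hx2, hv⟩
      refine ⟨x1 ⊔ x2, ?_, ?_⟩
      · intro hmem
        rcases hmprime x1 x2 hmem with h | h
        · exact hx1 h
        · exact hx2 h
      · apply sup_le
        · exact le_trans hu (sup_le (le_trans le_sup_left le_sup_left) le_sup_right)
        · exact le_trans hv (sup_le (le_trans le_sup_right le_sup_left) le_sup_right)
  have hdisj : F ∩ C = ∅ := by
    rw [Set.eq_empty_iff_forall_notMem]
    rintro c ⟨hcF, x, hx, hc⟩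
    exact hno x hx (hF.2.2 c hcF _ hc)
  obtain ⟨P, hPprime, hFP, hPC⟩ := rl_separation hF hCjc hdisj
  have hPm : P ⊆ m := by
    intro p hp
    by_contra hpm
    have hpC : p ∈ C := ⟨p, hpm, le_sup_left⟩
    rw [Set.eq_empty_iff_forall_notMem] at hPC
    exact hPC p ⟨hp, hpC⟩
  have := hmin P hPprime hFP hPm
  have haP : a ∈ P := this ▸ ha
  have haC : a ∈ C := ⟨t, ht, le_sup_right⟩
  rw [Set.eq_empty_iff_forall_notMem] at hPC
  exact hPC a ⟨haP, haC⟩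

/-- Corollary 3.15: for two distinct `F`-minimal prime filters `m₁, m₂`,
their supremum in the lattice of `ω_F`-filters, namely `ω_F` of the ideal generated by
`m₁ᶜ ∪ m₂ᶜ`, equals `A`. -/
theorem stmt_10 (F m₁ m₂ : Set α) (hF : IsFilter F)
    (h1 : IsMinPrimeOver F m₁) (h2 : IsMinPrimeOver F m₂) (hne : m₁ ≠ m₂) :
    omegaF F (idealGen (m₁ᶜ ∪ m₂ᶜ)) = Set.univ := by
  -- m₁ is not contained in m₂
  have hnsub : ¬ m₁ ⊆ m₂ := fun h => hne (h2.2.2 m₁ h1.1 h1.2.1 h)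
  obtain ⟨b, hb1, hb2⟩ : ∃ b, b ∈ m₁ ∧ b ∉ m₂ := by
    by_contra h
    push_neg at h
    exact hnsub h
  obtain ⟨x, hx1, hxF⟩ := rl_minprime_key hF h1 hb1
  have hmem : x ⊔ b ∈ idealGen (m₁ᶜ ∪ m₂ᶜ) := by
    intro I hI
    obtain ⟨⟨_, hIjoin, _⟩, hIsub⟩ := hI
    exact hIjoin x (hIsub (Or.inl hx1)) b (hIsub (Or.inr hb2))
  apply Set.eq_univ_of_forall
  intro a
  exact ⟨x ⊔ b, hmem, hF.2.2 _ hxF _ le_sup_left⟩
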